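/- Let N ≥ 1 and r ≥ 0 be integers, t_min > 0, β > 0 with β·(r+1) > 1, and τ_kill ≥ 0. Let (T_{j,k}), for j = 1, ..., N and k = 1, ..., r+1, be mutually independent Pareto(t_min, β) random variables, and set W_j = min_{1≤k≤r+1} T_{j,k}. Then E[ Σ_{j=1}^N ( r·τ_kill + W_j ) ] = N·( r·τ_kill + t_min + t_min/(β·(r+1) − 1) ). -/

import Mathlib

open MeasureTheory ProbabilityTheory Set

lemma lt_iInf_fin {n : ℕ} (f : Fin (n+1) → ℝ) (t : ℝ) :
    t < ⨅ k, f k ↔ ∀ k, t < f k := by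
  constructor
  · intro h k
    exact h.trans_le (ciInf_le (Set.Finite.bddBelow (Set.finite_range f)) k)
  · intro h
    obtain ⟨k0, hk0⟩ := Finite.exists_min f
    have : ⨅ k, f k = f k0 :=
      le_antisymm (ciInf_le (Set.Finite.bddBelow (Set.finite_range f)) k0) (le_ciInf hk0)
    rw [this]; exact h k0

lemma pareto_expectation {Ω : Type*} [MeasurableSpace Ω] (μ : Measure Ω) [IsProbabilityMeasure μ]
    (X : Ω → ℝ) (tmin b : ℝ) (htmin : 0 < tmin) (hb : 1 < b)
    (hX : Measurable X)
    (h1 : ∀ t : ℝ, tmin ≤ t → μ {ω | t < X ω} = ENNReal.ofReal ((tmin / t) ^ b))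
    (h2 : ∀ t : ℝ, t < tmin → μ {ω | t < X ω} = 1) :
    Integrable X μ ∧ ∫ ω, X ω ∂μ = tmin + tmin / (b - 1) := by
  have hb0 : 0 < b := lt_trans one_pos hb
  -- X ≥ 0 a.e.
  have hnn : 0 ≤ᵐ[μ] X := by
    have h0 : μ {ω | 0 < X ω} = 1 := h2 0 htmin
    have hms : MeasurableSet {ω | 0 < X ω} := measurableSet_lt measurable_const hX
    have : μ {ω | 0 < X ω}ᶜ = 0 := by
      rw [measure_compl hms (measure_ne_top μ _), h0, measure_univ, tsub_self]
    filter_upwards [measure_eq_zero_iff_ae_notMem.mp this] with ω hω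
    simp only [mem_compl_iff, mem_setOf_eq, not_not] at hω
    exact le_of_lt hω
  have hb1 : (0:ℝ) < b - 1 := by linarith
  have hval_nn : (0:ℝ) ≤ tmin + tmin / (b - 1) :=
    add_nonneg htmin.le (div_nonneg htmin.le hb1.le)
  -- layer cake
  have key : ∫⁻ ω, ENNReal.ofReal (X ω) ∂μ = ∫⁻ t in Ioi 0, μ {ω | t < X ω} :=
    lintegral_eq_lintegral_meas_lt μ hnn hX.aemeasurable
  -- part 1 : on (0, tmin]
  have part1 : ∫⁻ t in Ioc (0:ℝ) tmin, μ {ω | t < X ω} = ENNReal.ofReal tmin := by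
    have hc : ∀ t ∈ Ioc (0:ℝ) tmin, μ {ω | t < X ω} = (1 : ENNReal) := by
      intro t ht
      rcases lt_or_eq_of_le ht.2 with h | h
      · exact h2 t h
      · rw [h, h1 tmin le_rfl, div_self htmin.ne', Real.one_rpow, ENNReal.ofReal_one]
    rw [setLIntegral_congr_fun measurableSet_Ioc hc]
    simp [Real.volume_Ioc, htmin.le]
  -- part 2 : on (tmin, ∞)
  have hbneg : -b < -1 := by linarith
  have hptw : ∀ t ∈ Ioi tmin, tmin ^ b * t ^ (-b) = (tmin / t) ^ b := by
    intro t ht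
    have ht0 : (0:ℝ) < t := lt_trans htmin ht
    rw [Real.div_rpow htmin.le ht0.le, Real.rpow_neg ht0.le, div_eq_mul_inv]
  have hint : IntegrableOn (fun t : ℝ => (tmin / t) ^ b) (Ioi tmin) := by
    exact IntegrableOn.congr_fun
      ((integrableOn_Ioi_rpow_of_lt hbneg htmin).const_mul (tmin ^ b)) hptw measurableSet_Ioi
  have hval : ∫ t in Ioi tmin, (tmin / t) ^ b = tmin / (b - 1) := by
    rw [← setIntegral_congr_fun measurableSet_Ioi hptw, integral_const_mul _ _,
      integral_Ioi_rpow_of_lt hbneg htmin]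
    have h3 : tmin ^ b * tmin ^ (-b + 1) = tmin := by
      rw [← Real.rpow_add htmin]; norm_num
    have h4 : -b + 1 ≠ 0 := by linarith
    calc tmin ^ b * (-tmin ^ (-b + 1) / (-b + 1))
        = (tmin ^ b * tmin ^ (-b + 1)) * (-1 / (-b + 1)) := by ring
      _ = tmin * (-1 / (-b + 1)) := by rw [h3]
      _ = tmin / (b - 1) := by field_simp; ring
  have part2 : ∫⁻ t in Ioi tmin, μ {ω | t < X ω} = ENNReal.ofReal (tmin / (b - 1)) := by
    rw [setLIntegral_congr_fun measurableSet_Ioi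
      (fun t ht => h1 t (le_of_lt ht))]
    rw [← ofReal_integral_eq_lintegral_ofReal hint
      (ae_restrict_of_forall_mem measurableSet_Ioi (fun t ht => Real.rpow_nonneg
        (div_nonneg htmin.le (le_of_lt (lt_trans htmin ht))) b)), hval]
  -- combine
  have htotal : ∫⁻ ω, ENNReal.ofReal (X ω) ∂μ = ENNReal.ofReal (tmin + tmin / (b - 1)) := by
    rw [key, ← Ioc_union_Ioi_eq_Ioi htmin.le, lintegral_union measurableSet_Ioi
      (Ioc_disjoint_Ioi le_rfl), part1, part2,
      ENNReal.ofReal_add htmin.le (div_nonneg htmin.le hb1.le)]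
  have hInt : Integrable X μ := by
    refine ⟨hX.aestronglyMeasurable, (hasFiniteIntegral_iff_ofReal hnn).mpr ?_⟩
    rw [htotal]; exact ENNReal.ofReal_lt_top
  refine ⟨hInt, ?_⟩
  rw [integral_eq_lintegral_of_nonneg_ae hnn hX.aestronglyMeasurable, htotal,
    ENNReal.toReal_ofReal hval_nn]

/-- A real random variable `X` is Pareto(`tmin`, `β`): `P(X > t) = (tmin/t)^β` for `t ≥ tmin`
and `P(X > t) = 1` for `t < tmin`. -/
def IsPareto {Ω : Type*} [MeasurableSpace Ω] (μ : Measure Ω) (X : Ω → ℝ)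
    (tmin β : ℝ) : Prop :=
  Measurable X ∧
    (∀ t : ℝ, tmin ≤ t → μ {ω | t < X ω} = ENNReal.ofReal ((tmin / t) ^ β)) ∧
    (∀ t : ℝ, t < tmin → μ {ω | t < X ω} = 1)

/-- paper's Theorem 2, expected machine running time of Clone: with `N` tasks,
each with `r+1` mutually independent Pareto(`tmin`, `β`) attempts, where task `j` costs
`r·τ_kill` plus the time `W_j` of its fastest attempt, the expected total machine time is
`N·(r·τ_kill + tmin + tmin/(β(r+1) − 1))`. -/
theorem expected_time_clone
    {Ω : Type*} [MeasurableSpace Ω] (μ : Measure Ω) [IsProbabilityMeasure μ]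
    (N r : ℕ) (hN : 1 ≤ N) (tmin β τkill : ℝ)
    (htmin : 0 < tmin) (hβ : 0 < β) (hβr : 1 < β * (r + 1 : ℝ)) (hτ : 0 ≤ τkill)
    (T : Fin N → Fin (r + 1) → Ω → ℝ)
    (hindep : iIndepFun
      (fun p : Fin N × Fin (r + 1) => T p.1 p.2) μ)
    (hpareto : ∀ j k, IsPareto μ (T j k) tmin β) :
    ∫ ω, (∑ j, ((r : ℝ) * τkill + ⨅ k, T j k ω)) ∂μ
      = (N : ℝ) * ((r : ℝ) * τkill + tmin + tmin / (β * (r + 1 : ℝ) - 1)) := by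
  set b : ℝ := β * (r + 1 : ℝ) with hbdef
  set W : Fin N → Ω → ℝ := fun j ω => ⨅ k, T j k ω with hWdef
  have hWm : ∀ j, Measurable (W j) := fun j => Measurable.iInf (fun k => (hpareto j k).1)
  -- tail probability of W j
  have htail : ∀ (j : Fin N) (t : ℝ),
      μ {ω | t < W j ω} = ∏ k : Fin (r + 1), μ {ω | t < T j k ω} := by
    intro j t
    have hinj : Function.Injective (fun k : Fin (r+1) => ((j, k) : Fin N × Fin (r+1))) := by
      intro a c h; simpa using h
    have hkey := hindep.measure_inter_preimage_eq_mul
      (S := (Finset.univ : Finset (Fin (r+1))).map ⟨_, hinj⟩)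
      (sets := fun _ => Ioi t) (fun i _ => measurableSet_Ioi)
    have hset : (⋂ i ∈ (Finset.univ : Finset (Fin (r+1))).map ⟨_, hinj⟩,
        (fun ω => T i.1 i.2 ω) ⁻¹' Ioi t) = {ω | t < W j ω} := by
      ext ω
      simp only [Finset.mem_map, Finset.mem_univ, true_and, mem_iInter, mem_preimage,
        mem_Ioi, mem_setOf_eq, hWdef, lt_iInf_fin (fun k => T j k ω) t,
        Function.Embedding.coeFn_mk]
      constructor
      · intro h k; exact h (j, k) ⟨k, rfl⟩
      · rintro h p ⟨k, rfl⟩; exact h k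
    rw [hset, Finset.prod_map] at hkey
    exact hkey
  -- W j is Pareto(tmin, b)
  have h1 : ∀ (j : Fin N) (t : ℝ), tmin ≤ t →
      μ {ω | t < W j ω} = ENNReal.ofReal ((tmin / t) ^ b) := by
    intro j t ht
    have hx : (0:ℝ) ≤ tmin / t := div_nonneg htmin.le (htmin.le.trans ht)
    rw [htail j t]
    simp only [fun k => (hpareto j k).2.1 t ht]
    rw [Finset.prod_const, Finset.card_univ, Fintype.card_fin,
      ← ENNReal.ofReal_pow (Real.rpow_nonneg hx β)]
    congr 1
    rw [← Real.rpow_natCast ((tmin / t) ^ β) (r + 1), ← Real.rpow_mul hx]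
    push_cast
    rfl
  have h2 : ∀ (j : Fin N) (t : ℝ), t < tmin → μ {ω | t < W j ω} = 1 := by
    intro j t ht
    rw [htail j t]
    simp [fun k => (hpareto j k).2.2 t ht]
  have hbgt : 1 < b := hβr
  have hW := fun j => pareto_expectation μ (W j) tmin b htmin hbgt (hWm j) (h1 j) (h2 j)
  -- assemble
  have hint : ∀ j : Fin N, Integrable (fun ω => (r : ℝ) * τkill + W j ω) μ :=
    fun j => (integrable_const _).add (hW j).1
  calc ∫ ω, (∑ j, ((r : ℝ) * τkill + W j ω)) ∂μ
      = ∑ j, ∫ ω, ((r : ℝ) * τkill + W j ω) ∂μ :=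
        integral_finset_sum Finset.univ (fun j _ => hint j)
    _ = ∑ j : Fin N, ((r : ℝ) * τkill + (tmin + tmin / (b - 1))) := by
        refine Finset.sum_congr rfl (fun j _ => ?_)
        rw [integral_add (integrable_const _) (hW j).1, (hW j).2, integral_const]
        simp
    _ = (N : ℝ) * ((r : ℝ) * τkill + tmin + tmin / (b - 1)) := by
        rw [Finset.sum_const, Finset.card_univ, Fintype.card_fin, nsmul_eq_mul]
        ring
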